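/- If there exists a disjunctive interpolant for a formula φ and a set pos of positions in φ underneath only ∧ and ∨ connectives, then φ is unsatisfiable. -/

import Mathlib

namespace Stmt1

/-- Formulae of the constraint language, viewed as and/or combinations of
constraints (atoms). Positions "underneath only ∧ and ∨" are exactly the
positions visible in this tree structure; any other connectives are
swallowed inside the atoms.  `tr`/`fls` are the formulas true/false. -/
inductive Fml (Con : Type) : Type
  | atom (c : Con)
  | tr
  | fls
  | and (l r : Fml Con)
  | or (l r : Fml Con)

/-- Positions: paths in the formula tree (`true` = left argument, `false` = right). -/
abbrev Pos := List Bool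

variable {S V Con : Type} (U : S → Type)
  (interp : Con → (s : S) → (V → U s) → Prop) (cfv : Con → Set V)

/-- Evaluation of a formula in a structure `s` under a variable assignment. -/
def evalF : Fml Con → (s : S) → (V → U s) → Prop
  | .atom c, s, α => interp c s α
  | .tr, _, _ => True
  | .fls, _, _ => False
  | .and l r, s, α => evalF l s α ∧ evalF r s α
  | .or l r, s, α => evalF l s α ∨ evalF r s α

/-- Free variables of a formula. -/
def ffv : Fml Con → Set V
  | .atom c => cfv c
  | .tr => ∅
  | .fls => ∅
  | .and l r => ffv l ∪ ffv r
  | .or l r => ffv l ∪ ffv r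

/-- The subformula φ↓p at a position, if the position exists in φ. -/
def subAt : Fml Con → Pos → Option (Fml Con)
  | F, [] => some F
  | .and l r, b :: p => subAt (if b then l else r) p
  | .or l r, b :: p => subAt (if b then l else r) p
  | _, _ :: _ => none

/-- φ[p/ψ]: replace the subformula at position p by ψ. -/
def replaceAt : Fml Con → Pos → Fml Con → Fml Con
  | _, [], ψ => ψ
  | .and l r, b :: p, ψ =>
      if b then .and (replaceAt l p ψ) r else .and l (replaceAt r p ψ)
  | .or l r, b :: p, ψ =>
      if b then .or (replaceAt l p ψ) r else .or l (replaceAt r p ψ)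
  | F, _ :: _, _ => F

/-- Simultaneous (outermost-first) substitution of constraints at a set of
positions given by σ; `cur` is the current path. -/
def msubstAux (σ : Pos → Option Con) : Pos → Fml Con → Fml Con
  | cur, .and l r =>
      match σ cur with
      | some c => .atom c
      | none => .and (msubstAux σ (cur ++ [true]) l) (msubstAux σ (cur ++ [false]) r)
  | cur, .or l r =>
      match σ cur with
      | some c => .atom c
      | none => .or (msubstAux σ (cur ++ [true]) l) (msubstAux σ (cur ++ [false]) r)
  | cur, F =>
      match σ cur with
      | some c => .atom c
      | none => F

def msubst (σ : Pos → Option Con) (F : Fml Con) : Fml Con := msubstAux σ [] F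

/-- p is strictly above q. -/
def strictAbove (p q : Pos) : Prop := p <+: q ∧ p ≠ q

/-- q is a direct pos-child of p: q ∈ pos, p < q, and no r ∈ pos with p < r < q. -/
def dirChild (pos : Set Pos) (p q : Pos) : Prop :=
  q ∈ pos ∧ strictAbove p q ∧ ¬ ∃ r ∈ pos, strictAbove p r ∧ strictAbove r q

/-- q is a topmost position of pos. -/
def topmost (pos : Set Pos) (q : Pos) : Prop :=
  q ∈ pos ∧ ¬ ∃ r ∈ pos, strictAbove r q

open Classical in
/-- Substitution map replacing each direct pos-child q of p by the constraint I(q). -/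
noncomputable def childSub (pos : Set Pos) (I : Pos → Con) (p : Pos) : Pos → Option Con :=
  fun q => if dirChild pos p q then some (I q) else none

open Classical in
/-- Substitution map replacing each topmost position q of pos by I(q). -/
noncomputable def topSub (pos : Set Pos) (I : Pos → Con) : Pos → Option Con :=
  fun q => if topmost pos q then some (I q) else none

/-- Entailment over the class of structures. -/
def Entails (F G : Fml Con) : Prop := ∀ s α, evalF U interp F s α → evalF U interp G s α

/-- Unsatisfiability over the class of structures. -/
def Unsat (F : Fml Con) : Prop := ∀ s α, ¬ evalF U interp F s α

/-- Disjunctive interpolant for φ and pos (Definition 2 of the paper). -/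
def DisjInterpolant (φ : Fml Con) (pos : Set Pos) (I : Pos → Con) : Prop :=
  -- (1) for each p ∈ pos, (φ[q₁/I(q₁),…,qₙ/I(qₙ)])↓p ⊨ I(p), the qᵢ the direct pos-children
  (∀ p ∈ pos, ∀ G, subAt (msubst (childSub pos I p) φ) p = some G →
      Entails U interp G (.atom (I p))) ∧
  -- (2) for the topmost positions, φ[q₁/I(q₁),…,qₙ/I(qₙ)] ⊨ false
  Unsat U interp (msubst (topSub pos I) φ) ∧
  -- (3) fv(I(p)) ⊆ fv(φ↓p) ∩ fv(φ[p/true])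
  (∀ p ∈ pos, ∀ G, subAt φ p = some G →
      cfv (I p) ⊆ ffv cfv G ∩ ffv cfv (replaceAt φ p .tr))

/-- Height of a formula. -/
def ht : Fml Con → Nat
  | .and l r => max (ht l) (ht r) + 1
  | .or l r => max (ht l) (ht r) + 1
  | _ => 0

lemma subAt_len_le : ∀ (p : Pos) (F : Fml Con) (ψ : Fml Con),
    subAt F p = some ψ → p.length ≤ ht F := by
  intro p
  induction p with
  | nil => intro F ψ _; simp
  | cons b p ih =>
    intro F ψ h
    cases F <;> simp only [subAt] at h
    case atom => cases h
    case tr => cases h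
    case fls => cases h
    case and l r =>
      cases b <;> simp only [if_true, if_false, Bool.false_eq_true, ite_true, ite_false] at h
      · have := ih _ _ h; simp only [List.length_cons, ht]; omega
      · have := ih _ _ h; simp only [List.length_cons, ht]; omega
    case or l r =>
      cases b <;> simp only [if_true, if_false, Bool.false_eq_true, ite_true, ite_false] at h
      · have := ih _ _ h; simp only [List.length_cons, ht]; omega
      · have := ih _ _ h; simp only [List.length_cons, ht]; omega

lemma subAt_append : ∀ (p : Pos) (F ψ : Fml Con) (q : Pos),
    subAt F p = some ψ → subAt F (p ++ q) = subAt ψ q := by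
  intro p
  induction p with
  | nil => intro F ψ q h; simp [subAt] at h; subst h; rfl
  | cons b p ih =>
    intro F ψ q h
    cases F <;> simp only [subAt] at h ⊢
    case atom => cases h
    case tr => cases h
    case fls => cases h
    case and l r => exact ih _ _ _ h
    case or l r => exact ih _ _ _ h

/-- eval preservation under simultaneous substitution. -/
lemma eval_msubstAux (σ : Pos → Option Con) (s : S) (α : V → U s) :
    ∀ (F : Fml Con) (cur : Pos),
    (∀ q c, σ (cur ++ q) = some c → ∀ G, subAt F q = some G →
        evalF U interp G s α → interp c s α) →
    evalF U interp F s α → evalF U interp (msubstAux σ cur F) s α := by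
  intro F
  induction F with
  | atom c =>
    intro cur h hF
    simp only [msubstAux]
    cases hσ : σ cur with
    | none => exact hF
    | some c' => exact h [] c' (by simpa using hσ) _ rfl hF
  | tr =>
    intro cur h hF
    simp only [msubstAux]
    cases hσ : σ cur with
    | none => exact hF
    | some c' => exact h [] c' (by simpa using hσ) _ rfl hF
  | fls =>
    intro cur h hF
    simp only [msubstAux]
    cases hσ : σ cur with
    | none => exact hF
    | some c' => exact h [] c' (by simpa using hσ) _ rfl hF
  | and l r ihl ihr =>
    intro cur h hF
    simp only [msubstAux]
    cases hσ : σ cur with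
    | some c' => exact h [] c' (by simpa using hσ) _ rfl hF
    | none =>
      obtain ⟨hl, hr⟩ := hF
      refine ⟨ihl _ ?_ hl, ihr _ ?_ hr⟩
      · intro q c hq G hG hGv
        exact h (true :: q) c (by simpa using hq) G (by simpa [subAt] using hG) hGv
      · intro q c hq G hG hGv
        exact h (false :: q) c (by simpa using hq) G (by simpa [subAt] using hG) hGv
  | or l r ihl ihr =>
    intro cur h hF
    simp only [msubstAux]
    cases hσ : σ cur with
    | some c' => exact h [] c' (by simpa using hσ) _ rfl hF
    | none =>
      rcases hF with hl | hr
      · refine Or.inl (ihl _ ?_ hl)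
        intro q c hq G hG hGv
        exact h (true :: q) c (by simpa using hq) G (by simpa [subAt] using hG) hGv
      · refine Or.inr (ihr _ ?_ hr)
        intro q c hq G hG hGv
        exact h (false :: q) c (by simpa using hq) G (by simpa [subAt] using hG) hGv

/-- `subAt` after `msubstAux`, if nothing strictly above p was substituted. -/
lemma subAt_msubstAux (σ : Pos → Option Con) :
    ∀ (p : Pos) (F : Fml Con) (cur : Pos) (ψ : Fml Con), subAt F p = some ψ →
    (∀ r, r <+: p → r ≠ p → σ (cur ++ r) = none) →
    subAt (msubstAux σ cur F) p = some (msubstAux σ (cur ++ p) ψ) := by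
  intro p
  induction p with
  | nil =>
    intro F cur ψ h _
    simp [subAt] at h; subst h; simp [subAt]
  | cons b p ih =>
    intro F cur ψ h hnone
    have hcur : σ cur = none := by
      have := hnone [] (by simp) (by simp)
      simpa using this
    cases F <;> simp only [subAt] at h
    case atom => cases h
    case tr => cases h
    case fls => cases h
    case and l r =>
      simp only [msubstAux, hcur]
      cases b
      · simp only [Bool.false_eq_true, ite_false] at h ⊢
        rw [subAt]
        simp only [Bool.false_eq_true, ite_false]
        have := ih r (cur ++ [false]) ψ h (fun r' hr' hne => by
          have := hnone (false :: r') (List.cons_prefix_cons.mpr ⟨rfl, hr'⟩) (by simpa using hne)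
          simpa using this)
        simpa using this
      · simp only [ite_true] at h ⊢
        rw [subAt]
        simp only [ite_true]
        have := ih l (cur ++ [true]) ψ h (fun r' hr' hne => by
          have := hnone (true :: r') (List.cons_prefix_cons.mpr ⟨rfl, hr'⟩) (by simpa using hne)
          simpa using this)
        simpa using this
    case or l r =>
      simp only [msubstAux, hcur]
      cases b
      · simp only [Bool.false_eq_true, ite_false] at h ⊢
        rw [subAt]
        simp only [Bool.false_eq_true, ite_false]
        have := ih r (cur ++ [false]) ψ h (fun r' hr' hne => by
          have := hnone (false :: r') (List.cons_prefix_cons.mpr ⟨rfl, hr'⟩) (by simpa using hne)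
          simpa using this)
        simpa using this
      · simp only [ite_true] at h ⊢
        rw [subAt]
        simp only [ite_true]
        have := ih l (cur ++ [true]) ψ h (fun r' hr' hne => by
          have := hnone (true :: r') (List.cons_prefix_cons.mpr ⟨rfl, hr'⟩) (by simpa using hne)
          simpa using this)
        simpa using this

/-- if there exists a disjunctive interpolant for φ and a set pos
of positions underneath only ∧ and ∨, then φ is unsatisfiable. -/
theorem stmt1 (φ : Fml Con) (pos : Set Pos)
    (hvalid : ∀ p ∈ pos, (subAt φ p).isSome)
    (hex : ∃ I : Pos → Con, DisjInterpolant U interp cfv φ pos I) :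
    Unsat U interp φ := by
  classical
  obtain ⟨I, h1, h2, _⟩ := hex
  -- main claim by strong induction on ht φ - p.length
  have key : ∀ n : ℕ, ∀ p ∈ pos, ht φ - p.length ≤ n →
      ∀ G, subAt φ p = some G → ∀ s α, evalF U interp G s α → interp (I p) s α := by
    intro n
    induction n using Nat.strong_induction_on with
    | _ n IH =>
      intro p hp hlen G hG s α hGv
      set σ := childSub pos I p with hσdef
      have hnone : ∀ r, r <+: p → r ≠ p → σ ([] ++ r) = none := by
        intro r hpre hne
        simp only [List.nil_append, hσdef, childSub]
        rw [if_neg]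
        rintro ⟨-, ⟨hpr, -⟩, -⟩
        exact hne (hpre.eq_of_length (le_antisymm hpre.length_le hpr.length_le))
      have hsub : subAt (msubst σ φ) p = some (msubstAux σ ([] ++ p) G) :=
        subAt_msubstAux σ p φ [] G hG hnone
      simp only [List.nil_append] at hsub
      have hent := h1 p hp _ hsub
      apply hent s α
      apply eval_msubstAux U interp σ s α G p _ hGv
      intro q c hq G' hG' hGv'
      -- σ (p ++ q) = some c means p ++ q is a direct child, in particular in pos
      have hdc : dirChild pos p (p ++ q) ∧ c = I (p ++ q) := by
        by_cases hd : dirChild pos p (p ++ q)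
        · refine ⟨hd, ?_⟩
          simp only [hσdef, childSub, if_pos hd] at hq
          exact (Option.some_injective _ hq).symm
        · simp [hσdef, childSub, if_neg hd] at hq
      obtain ⟨⟨hmem, ⟨-, hneq⟩, -⟩, rfl⟩ := hdc
      have hqne : q ≠ [] := by rintro rfl; simp at hneq
      have hGfull : subAt φ (p ++ q) = some G' := by
        rw [subAt_append p φ G q hG]; exact hG'
      have hlenle : (p ++ q).length ≤ ht φ := subAt_len_le _ _ _ hGfull
      have hqpos : 0 < q.length := List.length_pos_iff.mpr hqne
      have hlt : ht φ - (p ++ q).length < n := by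
        simp only [List.length_append] at hlenle ⊢
        omega
      exact IH _ hlt (p ++ q) hmem le_rfl G' hGfull s α hGv'
  -- conclude unsatisfiability from condition (2)
  intro s α hφ
  apply h2 s α
  apply eval_msubstAux U interp (topSub pos I) s α φ [] _ hφ
  intro q c hq G hG hGv
  have htop : topmost pos q ∧ c = I q := by
    by_cases hd : topmost pos q
    · refine ⟨hd, ?_⟩
      simp only [topSub, List.nil_append, if_pos hd] at hq
      exact (Option.some_injective _ hq).symm
    · simp [topSub, if_neg hd] at hq
  obtain ⟨⟨hmem, -⟩, rfl⟩ := htop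
  exact key (ht φ) q hmem (by omega) G hG s α hGv

end Stmt1
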